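/- In the setting of the previous statement, if additionally ν_{f*} is an invariant measure for φ_{f*} (i.e., ν_{f*}(A) = ∫_S Q(A|s, f*(s)) dν_{f*}(s) for all measurable A), then ρ* = r̄(ν_{f*}, φ_{f*}) = ∫_S r(s, f*(s)) dν_{f*}(s), and (ν_{f*}, φ_{f*}) maximizes r̄(ν,φ) over all pairs satisfying F(ν,φ) = ν. -/

import Mathlib

open MeasureTheory ProbabilityTheory

/-- The measurized (deterministic) transition. -/
noncomputable def measurizedF {S U : Type*} [MeasurableSpace S] [MeasurableSpace U]
    (Q : Kernel (S × U) S) (φ : Kernel S U) (ν : Measure S) : Measure S :=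
  ν.bind (fun s => (φ s).bind (fun u => Q (s, u)))

/-- The measurized reward `r̄(ν, φ)`. -/
noncomputable def measurizedReward {S U : Type*} [MeasurableSpace S] [MeasurableSpace U]
    (r : S × U → ℝ) (φ : Kernel S U) (ν : Measure S) : ℝ :=
  ∫ s, ∫ u, r (s, u) ∂(φ s) ∂ν

/-- Bind of a measure with a kernel is the second marginal of the comp-product. -/
lemma bind_eq_map_snd' {α β : Type*} [MeasurableSpace α] [MeasurableSpace β]
    (μ : Measure α) [SFinite μ] (κ : Kernel α β) [IsSFiniteKernel κ] :
    μ.bind (fun a => κ a) = (μ ⊗ₘ κ).map Prod.snd := by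
  ext s hs
  rw [Measure.bind_apply hs (Kernel.measurable κ).aemeasurable, Measure.map_apply measurable_snd hs,
    Measure.compProd_apply (measurable_snd hs)]
  rfl

/-- Integral/integrability transfer along a bind. -/
lemma integral_bind' {α β : Type*} [MeasurableSpace α] [MeasurableSpace β]
    (μ : Measure α) [SFinite μ] (κ : Kernel α β) [IsSFiniteKernel κ] {g : β → ℝ}
    (hgm : Measurable g) (hint : Integrable g (μ.bind (fun a => κ a))) :
    Integrable (fun a => ∫ b, g b ∂(κ a)) μ ∧
      ∫ b, g b ∂(μ.bind (fun a => κ a)) = ∫ a, ∫ b, g b ∂(κ a) ∂μ := by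
  have hmap := bind_eq_map_snd' μ κ
  rw [hmap] at hint
  have hsm : AEStronglyMeasurable (fun p : α × β => g p.2) (μ ⊗ₘ κ) :=
    (hgm.comp measurable_snd).aestronglyMeasurable
  have hint2 : Integrable (fun p : α × β => g p.2) (μ ⊗ₘ κ) :=
    (integrable_map_measure hgm.aestronglyMeasurable measurable_snd.aemeasurable).mp hint
  constructor
  · have h2 := (Measure.integrable_compProd_iff hsm).mp hint2
    refine h2.2.mono ?_ ?_
    · exact (MeasureTheory.StronglyMeasurable.integral_kernel_prod_right'
        (κ := κ) ((hgm.comp measurable_snd).stronglyMeasurable)).aestronglyMeasurable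
    · refine Filter.Eventually.of_forall fun a => ?_
      calc ‖∫ b, g b ∂(κ a)‖ ≤ ∫ b, ‖g b‖ ∂(κ a) := norm_integral_le_integral_norm _
        _ ≤ ‖∫ b, ‖g b‖ ∂(κ a)‖ := le_abs_self _
  · rw [hmap, integral_map measurable_snd.aemeasurable hgm.aestronglyMeasurable,
      Measure.integral_compProd hint2]

/-- The measurized transition as a bind of the comp-product against `Q`. -/
lemma measurizedF_eq_bind {S U : Type*} [MeasurableSpace S] [MeasurableSpace U]
    (Q : Kernel (S × U) S) [IsMarkovKernel Q] (φ : Kernel S U) [IsMarkovKernel φ]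
    (ν : Measure S) [IsProbabilityMeasure ν] :
    measurizedF Q φ ν = (ν ⊗ₘ φ).bind (fun p => Q p) := by
  have hptwise : ∀ s : S, ((φ s).bind (fun u => Q (s, u)))
      = (Q ∘ₖ (Kernel.id ×ₖ φ)) s := by
    intro s
    have hm : Measurable (fun u : U => Q (s, u)) := Q.measurable.comp measurable_prodMk_left
    rw [Kernel.comp_apply, Kernel.prod_apply, Kernel.id_apply, Measure.dirac_prod]
    ext B hB
    rw [Measure.bind_apply hB hm.aemeasurable, Measure.bind_apply hB (Kernel.measurable Q).aemeasurable,
      lintegral_map (Kernel.measurable_coe Q hB) measurable_prodMk_left]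
  have h1 : measurizedF Q φ ν = ν.bind (fun s => (Q ∘ₖ (Kernel.id ×ₖ φ)) s) := by
    unfold measurizedF
    congr 1
    funext s
    exact hptwise s
  rw [h1]
  ext A hA
  rw [Measure.bind_apply hA (Kernel.measurable _).aemeasurable, Measure.bind_apply hA (Kernel.measurable Q).aemeasurable,
    Measure.lintegral_compProd (Kernel.measurable_coe Q hA)]
  refine lintegral_congr fun s => ?_
  have hm : Measurable (fun u : U => Q (s, u)) := Q.measurable.comp measurable_prodMk_left
  rw [← hptwise s, Measure.bind_apply hA hm.aemeasurable]

/-- Core bound: any equilibrium has measurized reward at most `ρ`. -/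
lemma reward_le_rho {S U : Type*} [MeasurableSpace S] [MeasurableSpace U]
    (Q : Kernel (S × U) S) [IsMarkovKernel Q]
    (Uset : S → Set U) (hUm : ∀ s, MeasurableSet (Uset s))
    (r : S × U → ℝ) (hrm : Measurable r) (C : ℝ) (hrb : ∀ p, |r p| ≤ C)
    (ρ : ℝ) (h : S → ℝ) (hhm : Measurable h)
    (hhint : ∀ ν : Measure S, IsProbabilityMeasure ν → Integrable h ν)
    (hsup : ∀ s, ∀ u ∈ Uset s, r (s, u) + ∫ s', h s' ∂(Q (s, u)) ≤ ρ + h s)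
    (ν : Measure S) [IsProbabilityMeasure ν]
    (φ : Kernel S U) [IsMarkovKernel φ] (hφU : ∀ s, φ s (Uset s) = 1)
    (heq : measurizedF Q φ ν = ν) :
    measurizedReward r φ ν ≤ ρ := by
  set μ' := ν ⊗ₘ φ with hμ'
  have hbind : μ'.bind (fun p => Q p) = ν := by
    rw [← measurizedF_eq_bind Q φ ν]; exact heq
  have hhintν : Integrable h (μ'.bind (fun p => Q p)) := by
    rw [hbind]; exact hhint ν inferInstance
  obtain ⟨hGint, hGeq⟩ := integral_bind' μ' Q hhm hhintν
  have hGval : ∫ p, ∫ s', h s' ∂(Q p) ∂μ' = ∫ s, h s ∂ν := by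
    rw [← hGeq, hbind]
  have hrint : Integrable r μ' := by
    refine (integrable_const C).mono' hrm.aestronglyMeasurable ?_
    exact Filter.Eventually.of_forall fun p => by simpa [Real.norm_eq_abs] using hrb p
  have hfst : μ'.map Prod.fst = ν := Measure.fst_compProd ν φ
  have hh1int : Integrable (fun p : S × U => h p.1) μ' := by
    have : Integrable h (μ'.map Prod.fst) := by rw [hfst]; exact hhint ν inferInstance
    exact (integrable_map_measure hhm.aestronglyMeasurable measurable_fst.aemeasurable).mp this
  have hh1val : ∫ p, h p.1 ∂μ' = ∫ s, h s ∂ν := by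
    rw [← hfst, integral_map measurable_fst.aemeasurable hhm.aestronglyMeasurable]
  have hWint : Integrable (fun p : S × U => ρ + h p.1 - (r p + ∫ s', h s' ∂(Q p))) μ' :=
    ((integrable_const ρ).add hh1int).sub (hrint.add hGint)
  have hWnn : 0 ≤ ∫ p, (ρ + h p.1 - (r p + ∫ s', h s' ∂(Q p))) ∂μ' := by
    rw [Measure.integral_compProd hWint]
    refine integral_nonneg fun s => integral_nonneg_of_ae ?_
    have hU1 : ∀ᵐ u ∂(φ s), u ∈ Uset s := by
      rw [ae_iff]
      have hcompl : (φ s) (Uset s)ᶜ = 0 := by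
        rw [measure_compl (hUm s) (measure_ne_top _ _), hφU s, measure_univ, tsub_self]
      exact hcompl
    filter_upwards [hU1] with u hu
    have := hsup s u hu
    simp only [Pi.zero_apply]
    linarith
  have hR : measurizedReward r φ ν = ∫ p, r p ∂μ' := (Measure.integral_compProd hrint).symm
  have hconst : ∫ _p, ρ ∂μ' = ρ := by simp
  have e1 : ∫ p, (ρ + h p.1 - (r p + ∫ s', h s' ∂(Q p))) ∂μ'
      = (∫ p, (ρ + h p.1) ∂μ') - ∫ p, (r p + ∫ s', h s' ∂(Q p)) ∂μ' :=
    integral_sub ((integrable_const ρ).add hh1int) (hrint.add hGint)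
  have e2 : ∫ p, (ρ + h p.1) ∂μ' = (∫ _p, ρ ∂μ') + ∫ p, h p.1 ∂μ' :=
    integral_add (integrable_const ρ) hh1int
  have e3 : ∫ p, (r p + ∫ s', h s' ∂(Q p)) ∂μ'
      = (∫ p, r p ∂μ') + ∫ p, ∫ s', h s' ∂(Q p) ∂μ' :=
    integral_add hrint hGint
  linarith [hWnn, e1, e2, e3]

/-- In the setting of Statement 13, if `ν_{f*}` is invariant
for the kernel `φ_{f*}` concentrated on the optimal selector `f*`, then
`ρ* = r̄(ν_{f*}, φ_{f*}) = ∫ r(s, f*(s)) dν_{f*}(s)` and `(ν_{f*}, φ_{f*})`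
maximizes `r̄(ν, φ)` over all equilibria `F(ν, φ) = ν`. -/
theorem stmt14 {S U : Type*} [MeasurableSpace S] [MeasurableSpace U]
    (Q : Kernel (S × U) S) [IsMarkovKernel Q]
    (Uset : S → Set U) (hUm : ∀ s, MeasurableSet (Uset s))
    (r : S × U → ℝ) (hrm : Measurable r) (C : ℝ) (hrb : ∀ p, |r p| ≤ C)
    (ρ : ℝ) (h : S → ℝ) (hhm : Measurable h)
    (hhint : ∀ ν : Measure S, IsProbabilityMeasure ν → Integrable h ν)
    (hhQ : ∀ p : S × U, Integrable h (Q p))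
    (f : S → U) (hfm : Measurable f) (hff : ∀ s, f s ∈ Uset s)
    (hsup : ∀ s, ∀ u ∈ Uset s, r (s, u) + ∫ s', h s' ∂(Q (s, u)) ≤ ρ + h s)
    (hsel : ∀ s, ρ + h s = r (s, f s) + ∫ s', h s' ∂(Q (s, f s)))
    (νf : Measure S) [IsProbabilityMeasure νf]
    (hinv : measurizedF Q (Kernel.deterministic f hfm) νf = νf) :
    ρ = measurizedReward r (Kernel.deterministic f hfm) νf ∧
      measurizedReward r (Kernel.deterministic f hfm) νf
        = ∫ s, r (s, f s) ∂νf ∧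
      (∀ ν : Measure S, IsProbabilityMeasure ν →
        ∀ φ : Kernel S U, IsMarkovKernel φ → (∀ s, φ s (Uset s) = 1) →
          measurizedF Q φ ν = ν →
            measurizedReward r φ ν
              ≤ measurizedReward r (Kernel.deterministic f hfm) νf) := by
  -- the kernel `s ↦ Q (s, f s)`
  set κf : Kernel S S :=
    Q ∘ₖ Kernel.deterministic (fun s => (s, f s)) (measurable_id.prodMk hfm) with hκfdef
  have hκf : ∀ s, κf s = Q (s, f s) := by
    intro s
    rw [hκfdef, Kernel.comp_apply, Kernel.deterministic_apply,
      Measure.dirac_bind (Kernel.measurable Q)]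
  have hbindf : νf.bind (fun s => κf s) = νf := by
    have hfun : (fun s => κf s)
        = fun s => ((Kernel.deterministic f hfm) s).bind (fun u => Q (s, u)) := by
      funext s
      have hm : Measurable (fun u : U => Q (s, u)) := Q.measurable.comp measurable_prodMk_left
      rw [hκf, Kernel.deterministic_apply, Measure.dirac_bind hm]
    rw [hfun]
    exact hinv
  obtain ⟨hHint, hHeq⟩ := integral_bind' νf κf hhm (by rw [hbindf]; exact hhint νf inferInstance)
  rw [hbindf] at hHeq
  have hrf_meas : Measurable (fun s => r (s, f s)) := hrm.comp (measurable_id.prodMk hfm)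
  have hrf_int : Integrable (fun s => r (s, f s)) νf := by
    refine (integrable_const C).mono' hrf_meas.aestronglyMeasurable ?_
    exact Filter.Eventually.of_forall fun s => by simpa [Real.norm_eq_abs] using hrb (s, f s)
  -- `ρ = ∫ r (s, f s) dνf`
  have hkey : ∫ s, r (s, f s) ∂νf = ρ := by
    have hcongr : ∀ s, r (s, f s) = ρ + h s - ∫ s', h s' ∂(κf s) := by
      intro s
      rw [hκf]
      linarith [hsel s]
    have hconst : ∫ _s, ρ ∂νf = ρ := by simp
    have e1 : ∫ s, (ρ + h s - ∫ s', h s' ∂(κf s)) ∂νf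
        = (∫ s, (ρ + h s) ∂νf) - ∫ s, ∫ s', h s' ∂(κf s) ∂νf :=
      integral_sub ((integrable_const ρ).add (hhint νf inferInstance)) hHint
    have e2 : ∫ s, (ρ + h s) ∂νf = (∫ _s, ρ ∂νf) + ∫ s, h s ∂νf :=
      integral_add (integrable_const ρ) (hhint νf inferInstance)
    have e0 : ∫ s, r (s, f s) ∂νf = ∫ s, (ρ + h s - ∫ s', h s' ∂(κf s)) ∂νf :=
      integral_congr_ae (Filter.Eventually.of_forall hcongr)
    linarith [e0, e1, e2, hHeq, hconst]
  -- the deterministic reward identity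
  have hdet : measurizedReward r (Kernel.deterministic f hfm) νf = ∫ s, r (s, f s) ∂νf := by
    unfold measurizedReward
    refine integral_congr_ae (Filter.Eventually.of_forall fun s => ?_)
    show ∫ u, r (s, u) ∂((Kernel.deterministic f hfm) s) = r (s, f s)
    rw [Kernel.deterministic_apply]
    exact integral_dirac' (fun u => r (s, u)) (f s)
      ((hrm.comp measurable_prodMk_left).stronglyMeasurable)
  refine ⟨by rw [hdet, hkey], hdet, ?_⟩
  intro ν hν φ hφ hφU heq
  haveI := hν
  haveI := hφ
  calc measurizedReward r φ ν ≤ ρ :=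
        reward_le_rho Q Uset hUm r hrm C hrb ρ h hhm hhint hsup ν φ hφU heq
    _ = measurizedReward r (Kernel.deterministic f hfm) νf := by rw [hdet, hkey]
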